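/- Every binary recurrent infinite word avoiding the formula f_e = AABCAAB.AABCAB.AABCB has the same set of factors as the Thue–Morse word (the fixed point of 0→01, 1→10). -/

import Mathlib

/-- The finite factor of the infinite word `w` starting at position `i` of length `n`. -/
def extract {α : Type*} (w : ℕ → α) (i n : ℕ) : List α :=
  (List.range n).map (fun k => w (i + k))

/-- `u` is a (finite) factor of the infinite word `w`. -/
def IsFactorOf {α : Type*} (u : List α) (w : ℕ → α) : Prop :=
  ∃ i, u = extract w i u.length

/-- A morphism (given on variables/letters) is non-erasing. -/
def NonErasing {V α : Type*} (h : V → List α) : Prop := ∀ v, h v ≠ []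

/-- The image of a pattern `p` under the morphism induced by `h`. -/
def patImage {V α : Type*} (h : V → List α) (p : List V) : List α :=
  (p.map h).flatten

/-- `h` is an occurrence of the formula `f` (a set of fragments) in the infinite word `w`:
`h` is non-erasing and the `h`-image of every fragment of `f` is a factor of `w`. -/
def OccursIn {V α : Type*} (f : Set (List V)) (h : V → List α) (w : ℕ → α) : Prop :=
  NonErasing h ∧ ∀ p ∈ f, IsFactorOf (patImage h p) w

/-- The infinite word `w` avoids the formula `f`. -/
def Avoids {V α : Type*} (w : ℕ → α) (f : Set (List V)) : Prop :=
  ∀ h : V → List α, ¬ OccursIn f h w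

/-- An infinite word is recurrent if every factor occurs infinitely often. -/
def Recurrent {α : Type*} (w : ℕ → α) : Prop :=
  ∀ u : List α, IsFactorOf u w → ∀ N, ∃ i ≥ N, u = extract w i u.length

/-- An infinite word is square-free if it has no factor `uu` with `u` nonempty. -/
def SquareFree {α : Type*} (w : ℕ → α) : Prop :=
  ∀ u : List α, u ≠ [] → ¬ IsFactorOf (u ++ u) w

/-- The formula `f'` divides the formula `f`: some non-erasing morphism maps every
fragment of `f'` to a factor of some fragment of `f`. -/
def Divides {V' V : Type*} (f' : Set (List V')) (f : Set (List V)) : Prop :=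
  ∃ h : V' → List V, NonErasing h ∧ ∀ q ∈ f', ∃ p ∈ f, patImage h q <:+: p

/-- The avoidability index of a formula: the least alphabet size over which there is an
infinite word avoiding it. -/
noncomputable def lamIdx {V : Type*} (f : Set (List V)) : ℕ :=
  sInf {n : ℕ | ∃ w : ℕ → Fin n, Avoids w f}

/-- A formula is avoidable if some infinite word over some finite alphabet avoids it. -/
def Avoidable {V : Type*} (f : Set (List V)) : Prop :=
  ∃ (n : ℕ) (w : ℕ → Fin n), Avoids w f

/-- An infinite word is `r`-free: every factor of the form `x ++ y ++ x` with `x ≠ []`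
(a repetition of period `|xy|` and exponent `|xyx|/|xy|`) has exponent `< r`. -/
def AlphaFree {α : Type*} (w : ℕ → α) (r : ℝ) : Prop :=
  ∀ x y : List α, x ≠ [] → IsFactorOf (x ++ y ++ x) w →
    ((2 * x.length + y.length : ℝ) / (x.length + y.length)) < r

/-- An infinite word is `r⁺`-free: every such repetition has exponent `≤ r`. -/
def AlphaPlusFree {α : Type*} (w : ℕ → α) (r : ℝ) : Prop :=
  ∀ x y : List α, x ≠ [] → IsFactorOf (x ++ y ++ x) w →
    ((2 * x.length + y.length : ℝ) / (x.length + y.length)) ≤ r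

/-- A finite word is `r⁺`-free. -/
def AlphaPlusFreeList {α : Type*} (u : List α) (r : ℝ) : Prop :=
  ∀ x y : List α, x ≠ [] → (x ++ y ++ x) <:+: u →
    ((2 * x.length + y.length : ℝ) / (x.length + y.length)) ≤ r

/-- The formula f_e = AABCAAB.AABCAB.AABCB, with variables A=0, B=1, C=2. -/
def feFormula : Set (List (Fin 3)) :=
  {[0,0,1,2,0,0,1], [0,0,1,2,0,1], [0,0,1,2,1]}

/-- The Thue–Morse morphism 0→01, 1→10. -/
def muTM : Fin 2 → List (Fin 2) := ![[0,1],[1,0]]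

/-- `t` is the fixed point of 0→01, 1→10 starting with 0 (the Thue–Morse word). -/
def IsThueMorse (t : ℕ → Fin 2) : Prop :=
  t 0 = 0 ∧ ∀ n, [t (2 * n), t (2 * n + 1)] = muTM (t n)

/- ===== auxiliary development ===== -/

namespace S12

@[simp] lemma extract_length {α : Type*} (w : ℕ → α) (i n : ℕ) :
    (extract w i n).length = n := by simp [extract]

@[simp] lemma extract_zero {α : Type*} (w : ℕ → α) (i : ℕ) : extract w i 0 = [] := by
  simp [extract]

lemma extract_add {α : Type*} (w : ℕ → α) (i m n : ℕ) :
    extract w i (m + n) = extract w i m ++ extract w (i + m) n := by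
  simp only [extract, List.range_add, List.map_append, List.map_map]
  congr 1
  apply List.map_congr_left
  intro a _
  simp [Function.comp_def]
  ring_nf

lemma extract_cons {α : Type*} (w : ℕ → α) (i n : ℕ) :
    extract w i (n + 1) = w i :: extract w (i + 1) n := by
  have := extract_add w i 1 n
  simpa [extract, Nat.add_comm 1 n] using this

lemma extract_one {α : Type*} (w : ℕ → α) (i : ℕ) : extract w i 1 = [w i] := by
  simp [extract_cons]

lemma factor_of_infix_extract {α : Type*} {w : ℕ → α} {u : List α} {i n : ℕ}
    (h : u <:+: extract w i n) : IsFactorOf u w := by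
  obtain ⟨a, b, hab⟩ := h
  have hlen : a.length + (u.length + b.length) = n := by
    have := congrArg List.length hab
    simpa [Nat.add_assoc] using this
  refine ⟨i + a.length, ?_⟩
  have hsplit : extract w i n =
      extract w i a.length ++ (extract w (i + a.length) u.length ++
        extract w (i + a.length + u.length) b.length) := by
    rw [← hlen, extract_add, extract_add]
  rw [hsplit, List.append_assoc] at hab
  have h1 := List.append_inj hab (by simp)
  have h2 := List.append_inj h1.2 (by simp)
  exact h2.1

lemma factor_infix {α : Type*} {w : ℕ → α} {u v : List α}
    (h : u <:+: v) (hv : IsFactorOf v w) : IsFactorOf u w := by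
  obtain ⟨i, hi⟩ := hv
  exact factor_of_infix_extract (w := w) (i := i) (n := v.length) (hi ▸ h)

lemma extract_infix_extract {α : Type*} (w : ℕ → α) {i n i' n' : ℕ}
    (h1 : i' ≤ i) (h2 : i + n ≤ i' + n') : extract w i n <:+: extract w i' n' := by
  have hn' : n' = (i - i') + (n + (i' + n' - (i + n))) := by omega
  rw [hn', extract_add, extract_add]
  have : i' + (i - i') = i := by omega
  rw [this]
  exact ⟨extract w i' (i - i'), extract w (i + n) (i' + n' - (i + n)), by simp⟩

/-- the TM morphism on words -/
def Mu (v : List (Fin 2)) : List (Fin 2) := (v.map muTM).flatten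

@[simp] lemma Mu_nil : Mu [] = [] := rfl

@[simp] lemma Mu_cons (x : Fin 2) (v : List (Fin 2)) : Mu (x :: v) = muTM x ++ Mu v := by
  simp [Mu]

@[simp] lemma Mu_append (u v : List (Fin 2)) : Mu (u ++ v) = Mu u ++ Mu v := by
  simp [Mu]

lemma muTM_eq (x : Fin 2) : muTM x = [x, x + 1] := by fin_cases x <;> decide

@[simp] lemma Mu_length (v : List (Fin 2)) : (Mu v).length = 2 * v.length := by
  induction v with
  | nil => simp
  | cons x v ih => simp [muTM_eq, ih]; omega

lemma Mu_infix {u v : List (Fin 2)} (h : u <:+: v) : Mu u <:+: Mu v := by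
  obtain ⟨a, b, hab⟩ := h
  exact ⟨Mu a, Mu b, by rw [← Mu_append, ← Mu_append, hab]⟩

lemma Mu_inj : ∀ {u v : List (Fin 2)}, Mu u = Mu v → u = v := by
  intro u
  induction u with
  | nil => intro v h; cases v with
    | nil => rfl
    | cons y v => simp [muTM_eq] at h
  | cons x u ih =>
    intro v h
    cases v with
    | nil => simp [muTM_eq] at h
    | cons y v =>
      simp only [Mu_cons, muTM_eq] at h
      simp only [List.cons_append, List.nil_append, List.cons.injEq] at h
      obtain ⟨rfl, _, h3⟩ := h
      exact congrArg₂ _ rfl (ih h3)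

lemma MuIter_infix (m : ℕ) {u v : List (Fin 2)} (h : u <:+: v) :
    Mu^[m] u <:+: Mu^[m] v := by
  induction m generalizing u v with
  | zero => simpa using h
  | succ m ih => rw [Function.iterate_succ_apply, Function.iterate_succ_apply]
                 exact ih (Mu_infix h)

section TM
variable {t : ℕ → Fin 2} (ht : IsThueMorse t)

include ht

lemma extract_two_mul (j n : ℕ) : extract t (2 * j) (2 * n) = Mu (extract t j n) := by
  induction n generalizing j with
  | zero => simp
  | succ n ih =>
    have h2 : 2 * (n + 1) = 2 + 2 * n := by omega
    rw [h2, extract_add, extract_cons, extract_one]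
    have hblk : [t (2 * j), t (2 * j + 1)] = muTM (t j) := ht.2 j
    have : extract t (2 * j + 2) (2 * n) = Mu (extract t (j + 1) n) := by
      have := ih (j + 1); rw [show 2 * (j + 1) = 2 * j + 2 by omega] at this; exact this
    rw [show (2:ℕ) * j + 1 + 1 = 2 * j + 2 by omega, this, extract_cons, Mu_cons, ← hblk]

lemma extract_pow (m j n : ℕ) :
    extract t (2 ^ m * j) (2 ^ m * n) = Mu^[m] (extract t j n) := by
  induction m generalizing j n with
  | zero => simp
  | succ m ih =>
    rw [Function.iterate_succ_apply]
    have := ih (2 * j) (2 * n)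
    rw [extract_two_mul ht] at this
    rw [show 2 ^ (m+1) * j = 2 ^ m * (2 * j) by ring,
        show 2 ^ (m+1) * n = 2 ^ m * (2 * n) by ring, this]

lemma extract_prefix_pow (m : ℕ) : extract t 0 (2 ^ m) = Mu^[m] [0] := by
  have := extract_pow ht m 0 1
  simpa [extract_one, ht.1] using this

lemma factor_t_mu {v : List (Fin 2)} (hv : IsFactorOf v t) : IsFactorOf (Mu v) t := by
  obtain ⟨j, hj⟩ := hv
  refine ⟨2 * j, ?_⟩
  rw [Mu_length, extract_two_mul ht, ← hj]

end TM

end S12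
namespace S12

/-- strong overlap-freeness : no factor x y x y x with x nonempty -/
def OFW (w : ℕ → Fin 2) : Prop :=
  ∀ x y : List (Fin 2), x ≠ [] → ¬ IsFactorOf (x ++ y ++ x ++ y ++ x) w

lemma OF_five {w : ℕ → Fin 2} (hOF : OFW w) (a b : Fin 2) :
    ¬ IsFactorOf [a, b, a, b, a] w := fun h =>
  hOF [a] [b] (by simp) (by simpa using h)

lemma OF_three {w : ℕ → Fin 2} (hOF : OFW w) (a : Fin 2) :
    ¬ IsFactorOf [a, a, a] w := fun h =>
  hOF [a] [] (by simp) (by simpa using h)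

lemma OF_seven {w : ℕ → Fin 2} (hOF : OFW w) (a b : Fin 2) :
    ¬ IsFactorOf [b, a, a, b, a, a, b] w := fun h =>
  hOF [b] [a, a] (by simp) (by simpa using h)

-- Fin 2 facts
lemma fin2_ne {x y : Fin 2} (h : x ≠ y) : y = x + 1 := by
  revert h; revert x y; decide

lemma fin2_chain {x y z : Fin 2} (h1 : x ≠ y) (h2 : y ≠ z) : x = z := by
  revert h1 h2; revert x y z; decide

/-- the gap lemma: a nonempty factor of a recurrent word can be repeated with
a nonempty gap. -/
lemma gap_lemma {w : ℕ → Fin 2} (hrec : Recurrent w) {D : List (Fin 2)}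
    (hD : IsFactorOf D w) :
    ∃ g : List (Fin 2), g ≠ [] ∧ IsFactorOf (D ++ g ++ D) w := by
  obtain ⟨i, hi⟩ := id hD
  obtain ⟨i', hi'ge, hi'⟩ := hrec D hD (i + D.length + 1)
  set g := extract w (i + D.length) (i' - (i + D.length)) with hg
  have hglen : g.length = i' - (i + D.length) := by simp [hg]
  have hgne : g ≠ [] := by
    intro h
    rw [h] at hglen; simp at hglen; omega
  refine ⟨g, hgne, i, ?_⟩
  have hlen : (D ++ g ++ D).length = D.length + (i' - (i + D.length)) + D.length := by
    simp [hglen, Nat.add_assoc]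
  rw [hlen, extract_add, extract_add]
  have h1 : i + (D.length + (i' - (i + D.length))) = i' := by omega
  rw [h1, ← hi, ← hg, ← hi']

/-- From avoidance of f_e and recurrence we get strong overlap-freeness. -/
lemma avoid_to_OFW {w : ℕ → Fin 2} (hrec : Recurrent w) (hav : Avoids w feFormula) :
    OFW w := by
  intro x y hx hfac
  set A := x ++ y with hA
  set B := x with hB
  have hD : x ++ y ++ x ++ y ++ x = A ++ A ++ B := by
    simp [hA, hB, List.append_assoc]
  rw [hD] at hfac
  obtain ⟨g, hgne, hDgD⟩ := gap_lemma hrec hfac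
  classical
  set h : Fin 3 → List (Fin 2) := fun i => if i = 0 then A else if i = 1 then B else g
    with hh
  have h0 : h 0 = A := rfl
  have h1 : h 1 = B := rfl
  have h2 : h 2 = g := rfl
  apply hav h
  constructor
  · intro v
    fin_cases v <;> simp [h0, h1, h2, hA, hB, (show x ≠ [] from hx), hgne]
  · intro p hp
    have hABpre : ∃ r, (A ++ B) ++ r = A ++ A ++ B :=
      ⟨y ++ x, by simp [hA, hB, List.append_assoc]⟩
    have hBpre : ∃ r, B ++ r = A ++ A ++ B :=
      ⟨y ++ (x ++ (y ++ x)), by simp [hA, hB, List.append_assoc]⟩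
    simp only [feFormula, Set.mem_insert_iff, Set.mem_singleton_iff] at hp
    rcases hp with rfl | rfl | rfl
    · have : patImage h [0,0,1,2,0,0,1] = (A ++ A ++ B) ++ g ++ (A ++ A ++ B) := by
        simp [patImage, h0, h1, h2, List.append_assoc]
      rw [this]; exact hDgD
    · have : patImage h [0,0,1,2,0,1] = (A ++ A ++ B) ++ g ++ (A ++ B) := by
        simp [patImage, h0, h1, h2, List.append_assoc]
      rw [this]
      obtain ⟨r, hr⟩ := hABpre
      refine factor_infix ⟨[], r, ?_⟩ hDgD
      simp [← hr, List.append_assoc]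
    · have : patImage h [0,0,1,2,1] = (A ++ A ++ B) ++ g ++ B := by
        simp [patImage, h0, h1, h2, List.append_assoc]
      rw [this]
      obtain ⟨r, hr⟩ := hBpre
      refine factor_infix ⟨[], r, ?_⟩ hDgD
      simp [← hr, List.append_assoc]

end S12
namespace S12

lemma fin2_add2 (a : Fin 2) : a + 1 + 1 = a := by revert a; decide

lemma fin2_resolve {u v : Fin 2} (h : u ≠ v + 1) : u = v := by
  revert h; revert u v; decide

lemma extract3 {α : Type*} (w : ℕ → α) (i : ℕ) :
    extract w i 3 = [w i, w (i+1), w (i+2)] := by simp [extract, List.range_succ]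

lemma extract5 {α : Type*} (w : ℕ → α) (i : ℕ) :
    extract w i 5 = [w i, w (i+1), w (i+2), w (i+3), w (i+4)] := by
  simp [extract, List.range_succ]

lemma extract7 {α : Type*} (w : ℕ → α) (i : ℕ) :
    extract w i 7 = [w i, w (i+1), w (i+2), w (i+3), w (i+4), w (i+5), w (i+6)] := by
  simp [extract, List.range_succ]

lemma mk_factor3 {w : ℕ → Fin 2} {i : ℕ} {a b c : Fin 2}
    (h1 : w i = a) (h2 : w (i+1) = b) (h3 : w (i+2) = c) :
    IsFactorOf [a, b, c] w :=
  ⟨i, by rw [show ([a,b,c] : List (Fin 2)).length = 3 from rfl, extract3, h1, h2, h3]⟩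

lemma mk_factor5 {w : ℕ → Fin 2} {i : ℕ} {a b : Fin 2}
    (h1 : w i = a) (h2 : w (i+1) = b) (h3 : w (i+2) = a) (h4 : w (i+3) = b)
    (h5 : w (i+4) = a) : IsFactorOf [a, b, a, b, a] w :=
  ⟨i, by rw [show ([a,b,a,b,a] : List (Fin 2)).length = 5 from rfl, extract5, h1, h2, h3, h4, h5]⟩

lemma mk_factor7 {w : ℕ → Fin 2} {i : ℕ} {a b : Fin 2}
    (h1 : w i = b) (h2 : w (i+1) = a) (h3 : w (i+2) = a) (h4 : w (i+3) = b)
    (h5 : w (i+4) = a) (h6 : w (i+5) = a) (h7 : w (i+6) = b) :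
    IsFactorOf [b, a, a, b, a, a, b] w :=
  ⟨i, by rw [show ([b,a,a,b,a,a,b] : List (Fin 2)).length = 7 from rfl, extract7,
    h1, h2, h3, h4, h5, h6, h7]⟩

/-- Two adjacent equal pairs at minimal distance have even distance. -/
lemma core {w : ℕ → Fin 2} (hOF : OFW w) {p q : ℕ} (hp1 : 1 ≤ p) (hpq : p < q)
    (hwp : w p = w (p+1)) (hwq : w q = w (q+1))
    (hbetween : ∀ r, p < r → r < q → w r ≠ w (r+1)) :
    (q - p) % 2 = 0 := by
  by_contra hodd
  set a := w p with ha
  have halt : ∀ m, p + 1 + m ≤ q → w (p + 1 + m) = (if m % 2 = 0 then a else a + 1) := by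
    intro m
    induction m with
    | zero => intro _; simpa using hwp.symm
    | succ m ih =>
      intro hle
      have hm := ih (by omega)
      have hne : w (p+1+m) ≠ w (p+1+m+1) := hbetween (p+1+m) (by omega) (by omega)
      have hstep : w (p+1+m+1) = w (p+1+m) + 1 := fin2_ne hne
      rw [show p+1+(m+1) = p+1+m+1 by omega, hstep, hm]
      rcases Nat.even_or_odd m with he | ho
      · have h1 : m % 2 = 0 := Nat.even_iff.mp he
        have h2 : (m+1) % 2 = 1 := by omega
        simp [h1, h2]
      · have h1 : m % 2 = 1 := Nat.odd_iff.mp ho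
        have h2 : (m+1) % 2 = 0 := by omega
        simp [h1, h2, fin2_add2]
  obtain ⟨d, rfl⟩ : ∃ d, q = p + d := ⟨q - p, by omega⟩
  have hdodd : d % 2 = 1 := by omega
  by_cases hd1 : d = 1
  · subst hd1
    have e2 : w (p+1) = a := hwp.symm
    have e3 : w (p+2) = a := by
      have := hwq; rw [show p+1+1 = p+2 by omega] at this; rw [← this]; exact e2
    exact OF_three hOF a (mk_factor3 rfl e2 e3)
  by_cases hd3 : d = 3
  · subst hd3
    have e1 : w (p+1) = a := hwp.symm
    have e2 : w (p+2) = a + 1 := by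
      have := halt 1 (by omega); rw [show p+1+1 = p+2 by omega] at this; simpa using this
    have e3 : w (p+3) = a := by
      have := halt 2 (by omega); rw [show p+1+2 = p+3 by omega] at this; simpa using this
    have e4 : w (p+4) = a := by
      have := hwq; rw [show p+3+1 = p+4 by omega] at this; rw [← this]; exact e3
    have e0 : w (p-1) = a + 1 := by
      by_contra hne
      have h0 : w (p-1) = a := fin2_resolve hne
      refine OF_three hOF a (mk_factor3 (i := p-1) h0 ?_ ?_)
      · rw [show p-1+1 = p by omega]
      · rw [show p-1+2 = p+1 by omega]; exact e1
    have e5 : w (p+5) = a + 1 := by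
      by_contra hne
      have h5 : w (p+5) = a := fin2_resolve hne
      refine OF_three hOF a (mk_factor3 (i := p+3) e3 ?_ ?_)
      · rw [show p+3+1 = p+4 by omega]; exact e4
      · rw [show p+3+2 = p+5 by omega]; exact h5
    refine OF_seven hOF a (a+1) (mk_factor7 (i := p-1) e0 ?_ ?_ ?_ ?_ ?_ ?_)
    · rw [show p-1+1 = p by omega]
    · rw [show p-1+2 = p+1 by omega]; exact e1
    · rw [show p-1+3 = p+2 by omega]; exact e2
    · rw [show p-1+4 = p+3 by omega]; exact e3
    · rw [show p-1+5 = p+4 by omega]; exact e4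
    · rw [show p-1+6 = p+5 by omega]; exact e5
  · have hd5 : 5 ≤ d := by omega
    have e1 : w (p+1) = a := by have := halt 0 (by omega); simpa using this
    have e2 : w (p+2) = a + 1 := by
      have := halt 1 (by omega); rw [show p+1+1 = p+2 by omega] at this; simpa using this
    have e3 : w (p+3) = a := by
      have := halt 2 (by omega); rw [show p+1+2 = p+3 by omega] at this; simpa using this
    have e4 : w (p+4) = a + 1 := by
      have := halt 3 (by omega); rw [show p+1+3 = p+4 by omega] at this; simpa using this
    have e5 : w (p+5) = a := by
      have := halt 4 (by omega); rw [show p+1+4 = p+5 by omega] at this; simpa using this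
    exact OF_five hOF a (a+1) (mk_factor5 (i := p+1) e1
      (by rw [show p+1+1 = p+2 by omega]; exact e2)
      (by rw [show p+1+2 = p+3 by omega]; exact e3)
      (by rw [show p+1+3 = p+4 by omega]; exact e4)
      (by rw [show p+1+4 = p+5 by omega]; exact e5))

lemma same_parity {w : ℕ → Fin 2} (hOF : OFW w) :
    ∀ n p q : ℕ, 1 ≤ p → p ≤ q → q - p ≤ n → w p = w (p+1) → w q = w (q+1) →
      (q - p) % 2 = 0 := by
  intro n
  induction n using Nat.strong_induction_on with
  | _ n IH =>
    intro p q hp hpq hd hwp hwq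
    rcases eq_or_lt_of_le hpq with rfl | hlt
    · simp
    by_cases hbet : ∃ r, p < r ∧ r < q ∧ w r = w (r+1)
    · obtain ⟨r, h1, h2, h3⟩ := hbet
      have e1 := IH (r - p) (by omega) p r hp (by omega) (by omega) hwp h3
      have e2 := IH (q - r) (by omega) r q (by omega) (by omega) (by omega) h3 hwq
      omega
    · push_neg at hbet
      exact core hOF hp hlt hwp hwq (fun r hr1 hr2 => hbet r hr1 hr2)

end S12
namespace S12

/-- existence of an adjacent equal pair at position ≥ 1 -/
lemma exists_pair {w : ℕ → Fin 2} (hOF : OFW w) : ∃ p, 1 ≤ p ∧ w p = w (p+1) := by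
  by_contra hno
  push_neg at hno
  have h13 : w 1 = w 3 := fin2_chain (hno 1 (by omega)) (hno 2 (by omega))
  have h24 : w 2 = w 4 := fin2_chain (hno 2 (by omega)) (hno 3 (by omega))
  have h35 : w 3 = w 5 := fin2_chain (hno 3 (by omega)) (hno 4 (by omega))
  refine OF_five hOF (w 1) (w 2) (mk_factor5 (i := 1) rfl ?_ ?_ ?_ ?_)
  · rw [show (1:ℕ)+1 = 2 from rfl]
  · rw [show (1:ℕ)+2 = 3 from rfl]; exact h13.symm
  · rw [show (1:ℕ)+3 = 4 from rfl]; exact h24.symm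
  · rw [show (1:ℕ)+4 = 5 from rfl]; rw [← h35]; exact h13.symm

/-- The key decomposition: an overlap-free recurrent binary word desubstitutes
under the Thue-Morse morphism. -/
lemma key {w : ℕ → Fin 2} (hOF : OFW w) (hrec : Recurrent w) :
    ∃ s : ℕ, 1 ≤ s ∧ ∃ w' : ℕ → Fin 2,
      (∀ j n, extract w (s + 2*j) (2*n) = Mu (extract w' j n)) ∧ OFW w' ∧ Recurrent w' := by
  obtain ⟨p0, hp0, hwp0⟩ := exists_pair hOF
  set s := if p0 % 2 = 0 then 1 else 2 with hs
  have hs12 : (s = 1 ∧ p0 % 2 = 0) ∨ (s = 2 ∧ p0 % 2 = 1) := by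
    rw [hs]; by_cases h : p0 % 2 = 0 <;> simp [h] <;> omega
  have hs1 : 1 ≤ s := by rcases hs12 with ⟨h, _⟩ | ⟨h, _⟩ <;> omega
  have halign : ∀ j, w (s + 2*j) ≠ w (s + 2*j + 1) := by
    intro j hcon
    rcases le_total p0 (s + 2*j) with hle | hle
    · have h := same_parity hOF (s+2*j-p0) p0 (s+2*j) hp0 hle le_rfl hwp0 hcon
      rcases hs12 with ⟨h1, h2⟩ | ⟨h1, h2⟩ <;> omega
    · have h := same_parity hOF (p0-(s+2*j)) (s+2*j) p0 (by omega) hle le_rfl hcon hwp0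
      rcases hs12 with ⟨h1, h2⟩ | ⟨h1, h2⟩ <;> omega
  set w' : ℕ → Fin 2 := fun j => w (s + 2*j) with hw'
  have hblock : ∀ j, [w (s + 2*j), w (s + 2*j + 1)] = muTM (w' j) := by
    intro j
    have := fin2_ne (halign j)
    rw [muTM_eq, hw', this]
  have hcorr : ∀ j n, extract w (s + 2*j) (2*n) = Mu (extract w' j n) := by
    intro j n
    induction n generalizing j with
    | zero => simp
    | succ n ih =>
      rw [show 2 * (n+1) = 2 + 2*n by omega, extract_add, extract_cons, extract_one,
        extract_cons]
      have h2 : extract w (s + 2*j + 2) (2*n) = Mu (extract w' (j+1) n) := by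
        have := ih (j+1); rw [show s + 2*(j+1) = s + 2*j + 2 by omega] at this; exact this
      rw [show s + 2*j + 1 + 1 = s + 2*j + 2 by omega, h2, Mu_cons, ← hblock j]
  have hOF' : OFW w' := by
    intro x y hx hfac
    obtain ⟨j, hj⟩ := hfac
    have hlen : (x ++ y ++ x ++ y ++ x).length = 3 * x.length + 2 * y.length := by
      simp; omega
    refine hOF (Mu x) (Mu y) (by
      intro h
      apply hx
      rw [← List.length_eq_zero_iff]
      have := congrArg List.length h
      rw [Mu_length] at this
      simpa using this) ⟨s + 2*j, ?_⟩
    have h1 : Mu x ++ Mu y ++ Mu x ++ Mu y ++ Mu x = Mu (x ++ y ++ x ++ y ++ x) := by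
      simp
    have h2 : (Mu x ++ Mu y ++ Mu x ++ Mu y ++ Mu x).length
        = 2 * (x ++ y ++ x ++ y ++ x).length := by simp; omega
    rw [h2, h1, hcorr j, ← hj]
  have hrec' : Recurrent w' := by
    intro v hv N
    obtain ⟨j, hj⟩ := id hv
    set V := extract w' j (v.length + 2) with hV
    have hVlen : V.length = v.length + 2 := by simp [hV]
    have hMufac : IsFactorOf (Mu V) w := by
      refine ⟨s + 2*j, ?_⟩
      rw [Mu_length, hVlen, hcorr j, ← hV]
    obtain ⟨q, hqge, hqe⟩ := hrec (Mu V) hMufac (s + 2*N + 2)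
    have hMuVlen : (Mu V).length = 2*v.length + 4 := by rw [Mu_length, hVlen]; omega
    -- expose the first four letters
    obtain ⟨x, y, rest, hVxy⟩ : ∃ x y rest, V = x :: y :: rest := by
      rcases V with _ | ⟨x, _ | ⟨y, rest⟩⟩
      · simp at hVlen
      · simp at hVlen
      · exact ⟨_, _, _, rfl⟩
    have hvals : extract w q (2*v.length + 4)
        = x :: (x+1) :: y :: (y+1) :: Mu rest := by
      rw [← hMuVlen, ← hqe, hVxy, Mu_cons, Mu_cons, muTM_eq, muTM_eq]
      rfl
    have e0 : extract w q (2*v.length+4) = w q :: extract w (q+1) (2*v.length+3) := by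
      rw [show 2*v.length + 4 = (2*v.length + 3) + 1 by omega, extract_cons]
    have e1 : extract w (q+1) (2*v.length+3) = w (q+1) :: extract w (q+2) (2*v.length+2) := by
      rw [show 2*v.length + 3 = (2*v.length + 2) + 1 by omega, extract_cons,
        show q+1+1 = q+2 by omega]
    have e2 : extract w (q+2) (2*v.length+2) = w (q+2) :: extract w (q+3) (2*v.length+1) := by
      rw [show 2*v.length + 2 = (2*v.length + 1) + 1 by omega, extract_cons,
        show q+2+1 = q+3 by omega]
    have e3 : extract w (q+3) (2*v.length+1) = w (q+3) :: extract w (q+4) (2*v.length) := by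
      rw [extract_cons, show q+3+1 = q+4 by omega]
    have h1 := hvals
    rw [e0] at h1
    injection h1 with hq0 h1
    rw [e1] at h1
    injection h1 with hq1 h1
    rw [e2] at h1
    injection h1 with hq2 h1
    rw [e3] at h1
    injection h1 with hq3 h1
    -- the occurrence must be aligned with the block structure
    have hqpar : q % 2 = s % 2 := by
      by_contra hne
      -- block at q+1 forces y = x
      have hb1 := halign ((q+1-s)/2)
      rw [show s + 2*((q+1-s)/2) = q+1 by omega] at hb1
      rw [show q+1+1 = q+2 by omega, hq1, hq2] at hb1
      have hyx : y = x := fin2_resolve (fun h => hb1 h.symm)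
      -- block at q-1 forces w (q-1) = x+1
      have hb2 := halign ((q-1-s)/2)
      rw [show s + 2*((q-1-s)/2) = q-1 by omega] at hb2
      rw [show q-1+1 = q by omega, hq0] at hb2
      have hprev : w (q-1) = x + 1 := fin2_ne (fun h => hb2 h.symm)
      -- overlap [x+1, x, x+1, x, x+1] at q-1
      refine OF_five hOF (x+1) x (mk_factor5 (i := q-1) hprev ?_ ?_ ?_ ?_)
      · rw [show q-1+1 = q by omega]; exact hq0
      · rw [show q-1+2 = q+1 by omega]; exact hq1
      · rw [show q-1+3 = q+2 by omega, hq2, hyx]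
      · rw [show q-1+4 = q+3 by omega, hq3, hyx]
    -- aligned: read off the occurrence in w'
    have hqs : q = s + 2*((q-s)/2) := by omega
    have hVeq : V = extract w' ((q-s)/2) (v.length + 2) := by
      apply Mu_inj
      rw [← hcorr ((q-s)/2) (v.length + 2), ← hqs]
      have hlen2 : 2 * (v.length + 2) = (Mu V).length := by rw [hMuVlen]; omega
      rw [hlen2, ← hqe]
    refine ⟨(q-s)/2, by omega, ?_⟩
    have hsplit : extract w' ((q-s)/2) (v.length + 2)
        = extract w' ((q-s)/2) v.length ++ extract w' ((q-s)/2 + v.length) 2 :=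
      extract_add w' _ _ _
    have hVsplit : V = extract w' j v.length ++ extract w' (j + v.length) 2 := by
      rw [hV]; exact extract_add w' _ _ _
    have := hVsplit.symm.trans (hVeq.trans hsplit)
    have hpref := (List.append_inj this (by simp [← hj])).1
    rw [← hj] at hpref
    exact hpref
  exact ⟨s, hs1, w', hcorr, hOF', hrec'⟩

end S12
namespace S12

lemma mu3_eq : Mu^[3] [0] = [0,1,1,0,1,0,0,1] := by decide

lemma mu4_eq : Mu^[4] [0] = [0,1,1,0,1,0,0,1,1,0,0,1,0,1,1,0] := by decide

lemma zeromem (x : Fin 2) : [(0 : Fin 2)] <:+: muTM x := by fin_cases x <;> decide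

lemma all2 (l : List (Fin 2)) (hl : l.length = 2) : l <:+: Mu^[3] [0] := by
  rw [mu3_eq]
  rcases l with _ | ⟨a, _ | ⟨b, _ | ⟨c, r⟩⟩⟩ <;> simp at hl
  fin_cases a <;> fin_cases b <;> decide

lemma base4 (u : List (Fin 2)) (hlen : u.length ≤ 4)
    (hcube : ∀ a : Fin 2, ¬ [a,a,a] <:+: u) : u <:+: Mu^[4] [0] := by
  rw [mu4_eq]
  rcases u with _ | ⟨a, _ | ⟨b, _ | ⟨c, _ | ⟨d, r⟩⟩⟩⟩
  · decide
  · fin_cases a <;> decide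
  · fin_cases a <;> fin_cases b <;> decide
  · revert hcube
    fin_cases a <;> fin_cases b <;> fin_cases c <;> decide
  · have h0 : r.length + 4 ≤ 4 := by simp at hlen; omega
    have hr : r = [] := List.length_eq_zero_iff.mp (by omega)
    subst hr
    revert hcube
    fin_cases a <;> fin_cases b <;> fin_cases c <;> fin_cases d <;> decide

lemma dirB {t : ℕ → Fin 2} (ht : IsThueMorse t) :
    ∀ n : ℕ, ∀ w : ℕ → Fin 2, OFW w → Recurrent w →
      ∀ u : List (Fin 2), IsFactorOf u w → u.length ≤ n → IsFactorOf u t := by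
  intro n
  induction n using Nat.strong_induction_on with
  | _ n IH =>
    intro w hOF hrec u hu hlen
    by_cases h4 : u.length ≤ 4
    · have hcube : ∀ a : Fin 2, ¬ [a,a,a] <:+: u := by
        intro a hinf
        exact OF_three hOF a (factor_infix hinf hu)
      have hinf : u <:+: Mu^[4] [0] := base4 u h4 hcube
      have heq : Mu^[4] [0] = extract t 0 16 := by
        rw [show (16:ℕ) = 2^4 by norm_num, extract_prefix_pow ht 4]
      exact factor_of_infix_extract (heq ▸ hinf)
    · push_neg at h4
      obtain ⟨s, hs1, w', hcorr, hOF', hrec'⟩ := key hOF hrec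
      obtain ⟨i, hige, hiu⟩ := hrec u hu s
      set j0 := (i - s)/2 with hj0
      set L := u.length/2 + 2 with hL
      have hv : IsFactorOf (extract w' j0 L) w' := ⟨j0, by rw [extract_length]⟩
      have hvt : IsFactorOf (extract w' j0 L) t := by
        apply IH (n-1) (by omega) w' hOF' hrec' _ hv
        rw [extract_length]; omega
      have hMuv : IsFactorOf (Mu (extract w' j0 L)) t := factor_t_mu ht hvt
      have huinf : u <:+: Mu (extract w' j0 L) := by
        rw [← hcorr j0 L, hiu]
        apply extract_infix_extract
        · omega
        · omega
      exact factor_infix huinf hMuv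

lemma dirA {t : ℕ → Fin 2} (ht : IsThueMorse t) {w : ℕ → Fin 2}
    (hOF : OFW w) (hrec : Recurrent w) {u : List (Fin 2)}
    (hu : IsFactorOf u t) : IsFactorOf u w := by
  obtain ⟨i0, hi0⟩ := hu
  set k := u.length with hk
  have hk2 : u.length ≤ 2^k := Nat.le_of_lt (Nat.lt_two_pow_self)
  set j := i0 / 2^k with hj
  have hppos : 0 < (2:ℕ)^k := pow_pos (by norm_num) k
  have e1 : 2^k * j ≤ i0 := by
    rw [hj, mul_comm]; exact Nat.div_mul_le_self i0 (2^k)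
  have e2 : i0 < 2^k * j + 2^k := by
    rw [hj]
    have h := Nat.div_add_mod i0 (2^k)
    have h2 := Nat.mod_lt i0 hppos
    omega
  have e4 : (2:ℕ)^k * 2 = 2^k + 2^k := by ring
  have h1 : u <:+: extract t (2^k * j) (2^k * 2) := by
    rw [hi0]
    apply extract_infix_extract
    · omega
    · omega
  rw [extract_pow ht] at h1
  have h2 : extract t j 2 <:+: Mu^[3] [0] := all2 _ (extract_length t j 2)
  have h3 : u <:+: Mu^[k+3] [0] := by
    rw [Function.iterate_add_apply]
    exact h1.trans (MuIter_infix k h2)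
  set m := k + 3 with hm
  set C := 2^(m+1) with hC
  have hCpos : 0 < C := pow_pos (by norm_num) (m+1)
  have hXfac : IsFactorOf (extract w 0 (2*C)) w := ⟨0, by rw [extract_length]⟩
  have hXt : IsFactorOf (extract w 0 (2*C)) t :=
    dirB ht (2*C) w hOF hrec _ hXfac (by rw [extract_length])
  obtain ⟨i, hiX⟩ := hXt
  rw [extract_length] at hiX
  set j0 := i / C + 1 with hj0
  have hdm2 := Nat.div_add_mod i C
  have hmlt2 : i % C < C := Nat.mod_lt _ hCpos
  have f1 : i ≤ C * j0 := by rw [hj0, Nat.mul_succ]; omega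
  have f2 : C * j0 + C ≤ i + 2*C := by rw [hj0, Nat.mul_succ]; omega
  have hb : extract t (C*j0) C <:+: extract t i (2*C) := by
    apply extract_infix_extract
    · exact f1
    · exact f2
  have hblock : extract t (C*j0) C = Mu^[m] (Mu [t j0]) := by
    have hp := extract_pow ht (m+1) j0 1
    rw [extract_one] at hp
    rw [show C*j0 = 2^(m+1)*j0 by rw [hC], show C = 2^(m+1)*1 by rw [hC]; omega, hp,
      Function.iterate_succ_apply]
  have hmu0 : Mu^[m] [0] <:+: extract t (C*j0) C := by
    rw [hblock]
    apply MuIter_infix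
    have : Mu [t j0] = muTM (t j0) := by simp
    rw [this]
    exact zeromem (t j0)
  have hfin : u <:+: extract t i (2*C) := h3.trans (hmu0.trans hb)
  rw [← hiX] at hfin
  exact factor_infix hfin hXfac

end S12


/-- every binary recurrent infinite word avoiding
f_e = AABCAAB.AABCAB.AABCB has the same set of factors as the Thue–Morse word. -/
theorem stmt12 (t : ℕ → Fin 2) (ht : IsThueMorse t) (w : ℕ → Fin 2)
    (hrec : Recurrent w) (hav : Avoids w feFormula) :
    ∀ u : List (Fin 2), IsFactorOf u w ↔ IsFactorOf u t := by
  have hOF : S12.OFW w := S12.avoid_to_OFW hrec hav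
  intro u
  constructor
  · intro hu
    exact S12.dirB ht u.length w hOF hrec u hu le_rfl
  · intro hu
    exact S12.dirA ht hOF hrec hu
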